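/- Let q be a prime power, let k ≥ 2, let s_1, s_2 ≥ 1 with s_1 + s_2 = k, and let G = I_k be the k×k identity matrix over F_q (so n = k). Then for each i ∈ {1,2}, E_i(G) = k·H_{s_i}. Equivalently, k·H_k − Σ_{s=s_i}^{k−1} C(k−s_i, s−s_i)/C(k−1, s) = k·H_{s_i}. -/

import Mathlib

open Finset

/-- The `r`-th harmonic number `H_r = ∑_{i=1}^r 1/i`, as a real number (`H_0 = 0`). -/
noncomputable def harm (r : ℕ) : ℝ := ∑ i ∈ Finset.range r, (1 : ℝ) / (i + 1)

/-- The span of the columns of `G` indexed by the subset `S ⊆ {1,…,n}`. -/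
noncomputable def colSpan (F : Type*) [Field F] {k n : ℕ}
    (G : Matrix (Fin k) (Fin n) F) (S : Finset (Fin n)) : Submodule F (Fin k → F) :=
  Submodule.span F ((fun j => fun i => G i j) '' (S : Set (Fin n)))

/-- `α_V(s)`: the number of `s`-element subsets `S ⊆ {1,…,n}` whose columns span a
subspace containing the target subspace `V`. -/
noncomputable def alphaCount (F : Type*) [Field F] {k n : ℕ}
    (G : Matrix (Fin k) (Fin n) F) (V : Submodule F (Fin k → F)) (s : ℕ) : ℕ :=
  Nat.card {S : Finset (Fin n) // S.card = s ∧ V ≤ colSpan F G S}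

/-- The first file subspace `F₁ = span(e_1, …, e_{s₁}) ⊆ F_q^k`. -/
noncomputable def file1 (F : Type*) [Field F] (k s1 : ℕ) : Submodule F (Fin k → F) :=
  Submodule.span F {v : Fin k → F | ∃ i : Fin k, (i : ℕ) < s1 ∧ v = Pi.single i 1}

/-- The second file subspace `F₂ = span(e_{s₁+1}, …, e_k) ⊆ F_q^k`. -/
noncomputable def file2 (F : Type*) [Field F] (k s1 : ℕ) : Submodule F (Fin k → F) :=
  Submodule.span F {v : Fin k → F | ∃ i : Fin k, s1 ≤ (i : ℕ) ∧ v = Pi.single i 1}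

/-- The expected retrieval time `E(G, V) = n·H_n − ∑_{s=1}^{n−1} α_V(s)/C(n−1,s)`. -/
noncomputable def Etime (F : Type*) [Field F] {k n : ℕ}
    (G : Matrix (Fin k) (Fin n) F) (V : Submodule F (Fin k → F)) : ℝ :=
  (n : ℝ) * harm n -
    ∑ s ∈ Finset.Icc 1 (n - 1), (alphaCount F G V s : ℝ) / ((n - 1).choose s : ℝ)

/-! ### Auxiliary combinatorial lemmas -/

lemma choose_id' (a c : ℕ) :
    ((a+c+1:ℝ)) * ((a+c).choose a) * (((a+c+1).choose a : ℝ) + ((a+c+1).choose (a+1) : ℝ))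
      = (a+c+2) * ((a+c+1).choose a : ℝ) * ((a+c+1).choose (a+1) : ℝ) := by
  have h1 : (a+c+1) * (a+c).choose a = (a+c+1).choose (a+1) * (a+1) := by
    have := Nat.add_one_mul_choose_eq (a+c) a
    simpa [Nat.succ_eq_add_one] using this
  have h2 : (a+c+1).choose (a+1) * (a+1) = (a+c+1).choose a * (c+1) := by
    have := Nat.choose_succ_right_eq (a+c+1) a
    simpa [show a+c+1-a = c+1 by omega] using this
  have h1' : ((a:ℝ)+c+1) * ((a+c).choose a : ℝ) = ((a+c+1).choose (a+1) : ℝ) * (a+1) := by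
    exact_mod_cast congrArg (Nat.cast : ℕ → ℝ) h1
  have h2' : ((a+c+1).choose (a+1) : ℝ) * ((a:ℝ)+1) = ((a+c+1).choose a : ℝ) * (c+1) := by
    exact_mod_cast congrArg (Nat.cast : ℕ → ℝ) h2
  nlinarith [h1', h2']

lemma sumG : ∀ (b a c : ℕ),
    ∑ t ∈ range (b+1), ((b.choose t : ℝ)) / (((a+b+c).choose (a+t) : ℝ))
      = ((a:ℝ)+b+c+1) / ((((a:ℝ)+c+1)) * (((a+c).choose a : ℝ))) := by
  intro b
  induction b with
  | zero =>
    intro a c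
    have hz : (0:ℝ) < ((a+c).choose a : ℝ) := by exact_mod_cast Nat.choose_pos (by omega)
    rw [Finset.sum_range_one, show a + 0 + c = a + c from by omega, add_zero]
    push_cast
    field_simp
    simp
  | succ b ih =>
    intro a c
    rw [Finset.sum_range_succ']
    have split : ∑ i ∈ range (b+1), (((b+1).choose (i+1) : ℝ)) / (((a+(b+1)+c).choose (a+(i+1)) : ℝ))
        = (∑ i ∈ range (b+1), ((b.choose i : ℝ)) / (((a+(b+1)+c).choose (a+(i+1)) : ℝ)))
          + ∑ i ∈ range (b+1), ((b.choose (i+1) : ℝ)) / (((a+(b+1)+c).choose (a+(i+1)) : ℝ)) := by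
      rw [← Finset.sum_add_distrib]
      refine Finset.sum_congr rfl fun i _ => ?_
      rw [Nat.choose_succ_succ b i]
      push_cast
      rw [add_div]
    rw [split]
    have h1 : ∑ i ∈ range (b+1), ((b.choose i : ℝ)) / (((a+(b+1)+c).choose (a+(i+1)) : ℝ))
        = ((a:ℝ)+b+c+2) / ((((a:ℝ)+c+2)) * (((a+c+1).choose (a+1) : ℝ))) := by
      calc ∑ i ∈ range (b+1), ((b.choose i : ℝ)) / (((a+(b+1)+c).choose (a+(i+1)) : ℝ))
          = ∑ i ∈ range (b+1), ((b.choose i : ℝ)) / ((((a+1)+b+c).choose ((a+1)+i) : ℝ)) := by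
            refine Finset.sum_congr rfl fun i _ => ?_
            rw [show a+(b+1)+c = a+1+b+c from by omega, show a+(i+1) = a+1+i from by omega]
        _ = _ := by
            rw [ih (a+1) c, show a+1+c = a+c+1 from by omega]
            push_cast; ring_nf
    have h2 : (∑ i ∈ range (b+1), ((b.choose (i+1) : ℝ)) / (((a+(b+1)+c).choose (a+(i+1)) : ℝ)))
          + (((b+1).choose 0 : ℝ)) / (((a+(b+1)+c).choose (a+0) : ℝ))
        = ((a:ℝ)+b+c+2) / ((((a:ℝ)+c+2)) * (((a+c+1).choose a : ℝ))) := by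
      have e1 : ∑ t ∈ range (b+2), ((b.choose t : ℝ)) / (((a+b+(c+1)).choose (a+t) : ℝ))
          = (∑ i ∈ range (b+1), ((b.choose (i+1) : ℝ)) / (((a+(b+1)+c).choose (a+(i+1)) : ℝ)))
            + (((b+1).choose 0 : ℝ)) / (((a+(b+1)+c).choose (a+0) : ℝ)) := by
        rw [Finset.sum_range_succ']
        congr 1
        · refine Finset.sum_congr rfl fun i _ => ?_
          rw [show a+b+(c+1) = a+(b+1)+c from by omega]
        · rw [Nat.choose_zero_right, Nat.choose_zero_right,
            show a+b+(c+1) = a+(b+1)+c from by omega]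
      rw [← e1, Finset.sum_range_succ, Nat.choose_succ_self]
      push_cast
      rw [zero_div, add_zero]
      have := ih a (c+1)
      push_cast at this
      rw [this, show a+(c+1) = a+c+1 from by omega]
      ring_nf
    rw [h1, add_assoc, h2]
    have hY0 : (0:ℝ) < ((a+c+1).choose a : ℝ) := by exact_mod_cast Nat.choose_pos (by omega)
    have hY1 : (0:ℝ) < ((a+c+1).choose (a+1) : ℝ) := by exact_mod_cast Nat.choose_pos (by omega)
    have hZ : (0:ℝ) < ((a+c).choose a : ℝ) := by exact_mod_cast Nat.choose_pos (by omega)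
    have hid := choose_id' a c
    push_cast
    field_simp
    linear_combination ((a:ℝ)+b+c+2) * hid

lemma sumMain : ∀ (m s1 : ℕ),
    ∑ t ∈ range (m+1), (((m+1).choose t : ℝ)) / (((s1+m).choose (s1+t) : ℝ))
      = ((s1:ℝ)+m+1) * ∑ i ∈ range (m+1), (1:ℝ)/((s1:ℝ)+i+1) := by
  intro m
  induction m with
  | zero =>
    intro s1
    have h : (s1:ℝ) + 1 ≠ 0 := by positivity
    rw [Finset.sum_range_one, Finset.sum_range_one]
    norm_num
    rw [mul_inv_cancel₀ h]
  | succ m ih =>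
    intro s1
    rw [Finset.sum_range_succ' (fun t => (((m+2).choose t : ℝ)) / (((s1+(m+1)).choose (s1+t) : ℝ)))]
    have split : ∑ i ∈ range (m+1), (((m+2).choose (i+1) : ℝ)) / (((s1+(m+1)).choose (s1+(i+1)) : ℝ))
        = (∑ i ∈ range (m+1), (((m+1).choose i : ℝ)) / (((s1+(m+1)).choose (s1+(i+1)) : ℝ)))
          + ∑ i ∈ range (m+1), (((m+1).choose (i+1) : ℝ)) / (((s1+(m+1)).choose (s1+(i+1)) : ℝ)) := by
      rw [← Finset.sum_add_distrib]
      refine Finset.sum_congr rfl fun i _ => ?_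
      rw [Nat.choose_succ_succ (m+1) i]
      push_cast
      rw [add_div]
    rw [split]
    have h1 : ∑ i ∈ range (m+1), (((m+1).choose i : ℝ)) / (((s1+(m+1)).choose (s1+(i+1)) : ℝ))
        = ((s1:ℝ)+m+2) * ∑ i ∈ range (m+1), (1:ℝ)/((s1:ℝ)+i+2) := by
      calc ∑ i ∈ range (m+1), (((m+1).choose i : ℝ)) / (((s1+(m+1)).choose (s1+(i+1)) : ℝ))
          = ∑ i ∈ range (m+1), (((m+1).choose i : ℝ)) / ((((s1+1)+m).choose ((s1+1)+i) : ℝ)) := by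
            refine Finset.sum_congr rfl fun i _ => ?_
            rw [show s1+(m+1) = s1+1+m from by omega, show s1+(i+1) = s1+1+i from by omega]
        _ = _ := by
            rw [ih (s1+1)]
            push_cast
            congr 1
            · ring
            · exact Finset.sum_congr rfl fun i _ => by ring
    have h2 : (∑ i ∈ range (m+1), (((m+1).choose (i+1) : ℝ)) / (((s1+(m+1)).choose (s1+(i+1)) : ℝ)))
          + (((m+2).choose 0 : ℝ)) / (((s1+(m+1)).choose (s1+0) : ℝ))
        = ((s1:ℝ)+m+2) / ((s1:ℝ)+1) := by
      have e1 : ∑ t ∈ range (m+2), (((m+1).choose t : ℝ)) / (((s1+(m+1)+0).choose (s1+t) : ℝ))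
          = (∑ i ∈ range (m+1), (((m+1).choose (i+1) : ℝ)) / (((s1+(m+1)).choose (s1+(i+1)) : ℝ)))
            + (((m+2).choose 0 : ℝ)) / (((s1+(m+1)).choose (s1+0) : ℝ)) := by
        rw [Finset.sum_range_succ']
        norm_num
      rw [← e1, sumG (m+1) s1 0]
      norm_num
      ring
    rw [h1, add_assoc, h2]
    rw [Finset.sum_range_succ' (fun i => (1:ℝ)/((s1:ℝ)+i+1))]
    push_cast
    rw [mul_add]
    have : ∑ i ∈ range (m+1), (1:ℝ)/((s1:ℝ)+(i+1)+1) = ∑ i ∈ range (m+1), (1:ℝ)/((s1:ℝ)+i+2) := by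
      refine Finset.sum_congr rfl fun i _ => by ring_nf
    rw [this]
    ring

lemma identity3 (k s1 s2 : ℕ) (hs1 : 1 ≤ s1) (hs2 : 1 ≤ s2) (hk : s1 + s2 = k) :
    (k:ℝ) * harm k -
        ∑ s ∈ Finset.Icc s1 (k - 1), ((k - s1).choose (s - s1) : ℝ) / ((k - 1).choose s : ℝ) =
      (k:ℝ) * harm s1 := by
  obtain ⟨m, rfl⟩ : ∃ m, s2 = m + 1 := ⟨s2 - 1, by omega⟩
  subst hk
  have hsum : ∑ s ∈ Finset.Icc s1 (s1+(m+1) - 1),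
        (((s1+(m+1)) - s1).choose (s - s1) : ℝ) / (((s1+(m+1)) - 1).choose s : ℝ)
      = ((s1:ℝ)+m+1) * ∑ i ∈ range (m+1), (1:ℝ)/((s1:ℝ)+i+1) := by
    rw [show s1+(m+1) - 1 = s1+m from by omega,
      show Finset.Icc s1 (s1+m) = Finset.Ico s1 (s1+m+1) from (Finset.Ico_add_one_right_eq_Icc _ _).symm,
      Finset.sum_Ico_eq_sum_range, show s1+m+1-s1 = m+1 from by omega]
    rw [← sumMain m s1]
    refine Finset.sum_congr rfl fun i _ => ?_
    rw [show s1+(m+1)-s1 = m+1 from by omega, show s1+i-s1 = i from by omega]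
  rw [hsum]
  have hh : harm (s1+(m+1)) = harm s1 + ∑ i ∈ range (m+1), (1:ℝ)/((s1:ℝ)+i+1) := by
    unfold harm
    rw [Finset.sum_range_add]
    congr 1
    refine Finset.sum_congr rfl fun i _ => ?_
    push_cast
    ring
  rw [hh]
  push_cast
  ring

/-! ### Linear algebra lemmas for the identity code -/

lemma colSpan_one (F : Type*) [Field F] {k : ℕ} (S : Finset (Fin k)) :
    colSpan F (1 : Matrix (Fin k) (Fin k) F) S
      = Submodule.span F ((fun j => (Pi.single j 1 : Fin k → F)) '' (S : Set (Fin k))) := by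
  unfold colSpan
  have : (fun j => fun i => (1 : Matrix (Fin k) (Fin k) F) i j)
      = fun j => (Pi.single j 1 : Fin k → F) := by
    funext j i
    by_cases h : i = j
    · subst h; simp [Matrix.one_apply]
    · simp [Matrix.one_apply, h, Pi.single_eq_of_ne h]
  rw [this]

lemma single_mem_iff (F : Type*) [Field F] {k : ℕ} (S : Finset (Fin k)) (i : Fin k) :
    (Pi.single i 1 : Fin k → F) ∈
      Submodule.span F ((fun j => (Pi.single j 1 : Fin k → F)) '' (S : Set (Fin k))) ↔ i ∈ S := by
  constructor
  · intro h
    by_contra hi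
    have hker : Submodule.span F ((fun j => (Pi.single j 1 : Fin k → F)) '' (S : Set (Fin k)))
        ≤ LinearMap.ker (LinearMap.proj i (R := F) (φ := fun _ : Fin k => F)) := by
      rw [Submodule.span_le]
      rintro v ⟨j, hj, rfl⟩
      have hji : j ≠ i := fun h => hi (h ▸ hj)
      simp [LinearMap.mem_ker, Pi.single_eq_of_ne (Ne.symm hji)]
    have := hker h
    simp [LinearMap.mem_ker] at this
  · intro h
    exact Submodule.subset_span ⟨i, by simpa using h, rfl⟩

lemma file1_le_iff (F : Type*) [Field F] {k s1 : ℕ} (S : Finset (Fin k)) :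
    file1 F k s1 ≤ colSpan F (1 : Matrix (Fin k) (Fin k) F) S
      ↔ ∀ i : Fin k, (i : ℕ) < s1 → i ∈ S := by
  rw [colSpan_one, file1, Submodule.span_le]
  constructor
  · intro h i hi
    have hmem := h (show (Pi.single i 1 : Fin k → F) ∈ _ from ⟨i, hi, rfl⟩)
    rw [SetLike.mem_coe, single_mem_iff] at hmem
    exact hmem
  · rintro h v ⟨i, hi, rfl⟩
    rw [SetLike.mem_coe, single_mem_iff]
    exact h i hi

lemma file2_le_iff (F : Type*) [Field F] {k s1 : ℕ} (S : Finset (Fin k)) :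
    file2 F k s1 ≤ colSpan F (1 : Matrix (Fin k) (Fin k) F) S
      ↔ ∀ i : Fin k, s1 ≤ (i : ℕ) → i ∈ S := by
  rw [colSpan_one, file2, Submodule.span_le]
  constructor
  · intro h i hi
    have hmem := h (show (Pi.single i 1 : Fin k → F) ∈ _ from ⟨i, hi, rfl⟩)
    rw [SetLike.mem_coe, single_mem_iff] at hmem
    exact hmem
  · rintro h v ⟨i, hi, rfl⟩
    rw [SetLike.mem_coe, single_mem_iff]
    exact h i hi

lemma card_supersets {α : Type*} [Fintype α] [DecidableEq α] (A : Finset α) (s : ℕ)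
    (h : A.card ≤ s) :
    Nat.card {S : Finset α // S.card = s ∧ A ⊆ S}
      = (Fintype.card α - A.card).choose (s - A.card) := by
  have e : {S : Finset α // S.card = s ∧ A ⊆ S} ≃ {T // T ∈ Aᶜ.powersetCard (s - A.card)} :=
    { toFun := fun S => ⟨S.1 \ A, by
        rw [mem_powersetCard]
        refine ⟨fun x hx => ?_, ?_⟩
        · rw [Finset.mem_sdiff] at hx
          simpa [Finset.mem_compl] using hx.2
        · rw [Finset.card_sdiff_of_subset S.2.2, S.2.1]⟩
      invFun := fun T => ⟨T.1 ∪ A, by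
        obtain ⟨hsub, hcard⟩ := Finset.mem_powersetCard.1 T.2
        have hdisj : Disjoint T.1 A := by
          rw [Finset.disjoint_left]
          intro x hx
          simpa [Finset.mem_compl] using hsub hx
        refine ⟨?_, Finset.subset_union_right⟩
        rw [Finset.card_union_of_disjoint hdisj, hcard]
        omega⟩
      left_inv := fun S => Subtype.ext (Finset.sdiff_union_of_subset S.2.2)
      right_inv := fun T => Subtype.ext (by
        obtain ⟨hsub, _⟩ := Finset.mem_powersetCard.1 T.2
        have hdisj : Disjoint T.1 A := by
          rw [Finset.disjoint_left]
          intro x hx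
          simpa [Finset.mem_compl] using hsub hx
        exact Finset.union_sdiff_cancel_right hdisj) }
  rw [Nat.card_congr e, Nat.card_eq_fintype_card, Fintype.card_coe,
    Finset.card_powersetCard, Finset.card_compl]

lemma card_supersets_zero {α : Type*} [Fintype α] [DecidableEq α] (A : Finset α) (s : ℕ)
    (h : s < A.card) :
    Nat.card {S : Finset α // S.card = s ∧ A ⊆ S} = 0 := by
  have : IsEmpty {S : Finset α // S.card = s ∧ A ⊆ S} :=
    ⟨fun S => by have := Finset.card_le_card S.2.2; omega⟩
  simp [Nat.card_eq_zero]

lemma cardA1 {k s1 : ℕ} (h : s1 ≤ k) :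
    (Finset.univ.filter fun i : Fin k => (i : ℕ) < s1).card = s1 := by
  have : (Finset.univ.filter fun i : Fin k => (i : ℕ) < s1)
      = (Finset.range s1).attachFin (fun m hm => lt_of_lt_of_le (Finset.mem_range.1 hm) h) := by
    ext i
    simp [Finset.mem_attachFin]
  rw [this, Finset.card_attachFin, Finset.card_range]

lemma cardA2 {k s1 : ℕ} (h : s1 ≤ k) :
    (Finset.univ.filter fun i : Fin k => s1 ≤ (i : ℕ)).card = k - s1 := by
  have h2 : (Finset.univ.filter fun i : Fin k => s1 ≤ (i : ℕ))
      = (Finset.univ.filter fun i : Fin k => ¬ ((i : ℕ) < s1)) := by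
    apply Finset.filter_congr
    intro i _
    simp [not_lt]
  have h3 := Finset.card_filter_add_card_filter_not
    (s := (Finset.univ : Finset (Fin k))) (p := fun i : Fin k => (i : ℕ) < s1)
  rw [cardA1 h] at h3
  simp only [Finset.card_univ, Fintype.card_fin] at h3
  rw [h2]
  omega

lemma alpha1_eq (F : Type*) [Field F] {k s1 : ℕ} (s : ℕ) :
    alphaCount F (1 : Matrix (Fin k) (Fin k) F) (file1 F k s1) s
      = Nat.card {S : Finset (Fin k) // S.card = s ∧
          (Finset.univ.filter fun i : Fin k => (i : ℕ) < s1) ⊆ S} := by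
  unfold alphaCount
  refine Nat.card_congr (Equiv.subtypeEquivRight fun S => ?_)
  refine and_congr_right fun _ => ?_
  rw [file1_le_iff]
  simp [Finset.subset_iff]

lemma alpha2_eq (F : Type*) [Field F] {k s1 : ℕ} (s : ℕ) :
    alphaCount F (1 : Matrix (Fin k) (Fin k) F) (file2 F k s1) s
      = Nat.card {S : Finset (Fin k) // S.card = s ∧
          (Finset.univ.filter fun i : Fin k => s1 ≤ (i : ℕ)) ⊆ S} := by
  unfold alphaCount
  refine Nat.card_congr (Equiv.subtypeEquivRight fun S => ?_)
  refine and_congr_right fun _ => ?_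
  rw [file2_le_iff]
  simp [Finset.subset_iff]

/-- Expected retrieval times of the identity code: `E_i(I_k) = k·H_{s_i}`;
equivalently `k·H_k − ∑_{s=s_i}^{k−1} C(k−s_i, s−s_i)/C(k−1, s) = k·H_{s_i}`. -/
theorem stmt11 (q k s1 s2 : ℕ) (hq : IsPrimePow q)
    (F : Type*) [Field F] [Fintype F] (hF : Fintype.card F = q)
    (hk2 : 2 ≤ k) (hs1 : 1 ≤ s1) (hs2 : 1 ≤ s2) (hk : s1 + s2 = k) :
    Etime F (1 : Matrix (Fin k) (Fin k) F) (file1 F k s1) = (k : ℝ) * harm s1 ∧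
    Etime F (1 : Matrix (Fin k) (Fin k) F) (file2 F k s1) = (k : ℝ) * harm s2 ∧
    (k : ℝ) * harm k -
        ∑ s ∈ Finset.Icc s1 (k - 1), ((k - s1).choose (s - s1) : ℝ) / ((k - 1).choose s : ℝ) =
      (k : ℝ) * harm s1 ∧
    (k : ℝ) * harm k -
        ∑ s ∈ Finset.Icc s2 (k - 1), ((k - s2).choose (s - s2) : ℝ) / ((k - 1).choose s : ℝ) =
      (k : ℝ) * harm s2 := by
  have hs1k : s1 ≤ k := by omega
  have hs2k : s2 ≤ k := by omega
  refine ⟨?_, ?_, identity3 k s1 s2 hs1 hs2 hk, identity3 k s2 s1 hs2 hs1 (by omega)⟩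
  · unfold Etime
    have hsum : ∑ s ∈ Finset.Icc 1 (k-1),
          (alphaCount F (1 : Matrix (Fin k) (Fin k) F) (file1 F k s1) s : ℝ) / ((k-1).choose s : ℝ)
        = ∑ s ∈ Finset.Icc s1 (k-1), ((k - s1).choose (s - s1) : ℝ) / ((k-1).choose s : ℝ) := by
      rw [← Finset.sum_subset (Finset.Icc_subset_Icc hs1 le_rfl)
        (fun x _ hx => ?_)]
      · refine Finset.sum_congr rfl fun x hx => ?_
        have hxs : s1 ≤ x := (Finset.mem_Icc.1 hx).1
        rw [alpha1_eq, card_supersets _ _ (by rw [cardA1 hs1k]; exact hxs),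
          cardA1 hs1k, Fintype.card_fin]
      · have hxlt : x < s1 := by
          simp only [Finset.mem_Icc, not_and, not_le] at hx
          rcases Finset.mem_Icc.1 ‹x ∈ Finset.Icc 1 (k-1)› with ⟨_, hxu⟩
          by_contra hc
          exact absurd (hx (by omega)) (by omega)
        rw [alpha1_eq, card_supersets_zero _ _ (by rw [cardA1 hs1k]; exact hxlt)]
        simp
    rw [hsum]
    exact identity3 k s1 s2 hs1 hs2 hk
  · unfold Etime
    have hA2 : (Finset.univ.filter fun i : Fin k => s1 ≤ (i : ℕ)).card = s2 := by
      rw [cardA2 hs1k]; omega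
    have hsum : ∑ s ∈ Finset.Icc 1 (k-1),
          (alphaCount F (1 : Matrix (Fin k) (Fin k) F) (file2 F k s1) s : ℝ) / ((k-1).choose s : ℝ)
        = ∑ s ∈ Finset.Icc s2 (k-1), ((k - s2).choose (s - s2) : ℝ) / ((k-1).choose s : ℝ) := by
      rw [← Finset.sum_subset (Finset.Icc_subset_Icc hs2 le_rfl)
        (fun x _ hx => ?_)]
      · refine Finset.sum_congr rfl fun x hx => ?_
        have hxs : s2 ≤ x := (Finset.mem_Icc.1 hx).1
        rw [alpha2_eq, card_supersets _ _ (by rw [hA2]; exact hxs), hA2, Fintype.card_fin]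
      · have hxlt : x < s2 := by
          simp only [Finset.mem_Icc, not_and, not_le] at hx
          rcases Finset.mem_Icc.1 ‹x ∈ Finset.Icc 1 (k-1)› with ⟨_, hxu⟩
          by_contra hc
          exact absurd (hx (by omega)) (by omega)
        rw [alpha2_eq, card_supersets_zero _ _ (by rw [hA2]; exact hxlt)]
        simp
    rw [hsum]
    exact identity3 k s2 s1 hs2 hs1 (by omega)
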